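/- Fix 0 < β < π/4 and let D = {v ∈ ℂ : |Im(v)| ≤ −tan(β)·Re(v) + √2/2}. There exists a constant M* > 0 such that for every v ∈ D and every h with 0 < h ≤ 1, |sinh(v·√h/2)| ≥ M*·√h·|v| and |cosh(v·√h/2)| ≥ M*. -/

import Mathlib

lemma sq_abs_sinh' (x y : ℝ) :
    ‖Complex.sinh (x + y * Complex.I)‖ ^ 2
      = Real.sinh x ^ 2 + Real.sin y ^ 2 := by
  rw [Complex.sq_norm, Complex.sinh_add, Complex.sinh_mul_I, Complex.cosh_mul_I,
    ← Complex.ofReal_sinh, ← Complex.ofReal_cosh, ← Complex.ofReal_sin, ← Complex.ofReal_cos,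
    Complex.normSq_apply]
  simp [Complex.sinh_ofReal_re, Complex.cosh_ofReal_re, Complex.cos_ofReal_re,
    Complex.sin_ofReal_re]
  nlinarith [Real.sin_sq_add_cos_sq y, Real.cosh_sq x]

lemma sq_abs_cosh' (x y : ℝ) :
    ‖Complex.cosh (x + y * Complex.I)‖ ^ 2
      = Real.sinh x ^ 2 + Real.cos y ^ 2 := by
  rw [Complex.sq_norm, Complex.cosh_add, Complex.sinh_mul_I, Complex.cosh_mul_I,
    ← Complex.ofReal_sinh, ← Complex.ofReal_cosh, ← Complex.ofReal_sin, ← Complex.ofReal_cos,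
    Complex.normSq_apply]
  simp [Complex.sinh_ofReal_re, Complex.cosh_ofReal_re, Complex.cos_ofReal_re,
    Complex.sin_ofReal_re]
  nlinarith [Real.sin_sq_add_cos_sq y, Real.cosh_sq x]

lemma sq_le_sinh_sq (u : ℝ) : u ^ 2 ≤ Real.sinh u ^ 2 := by
  rcases lt_trichotomy u 0 with h | h | h
  · have h1 : -u < Real.sinh (-u) := Real.self_lt_sinh_iff.mpr (by linarith)
    rw [Real.sinh_neg] at h1
    nlinarith
  · simp [h]
  · have h1 : u < Real.sinh u := Real.self_lt_sinh_iff.mpr h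
    nlinarith

lemma sin_sq_abs' (y : ℝ) : Real.sin |y| ^ 2 = Real.sin y ^ 2 := by
  rcases abs_cases y with ⟨h, _⟩ | ⟨h, _⟩ <;> simp [h, Real.sin_neg]

set_option maxHeartbeats 1000000 in
/-- Uniform lower bounds for `sinh` and `cosh` on the sectorial domain
`D = {v : |Im v| ≤ −tan β · Re v + √2/2}`, `0 < β < π/4`: there is `M* > 0` with
`|sinh(v√h/2)| ≥ M* √h |v|` and `|cosh(v√h/2)| ≥ M*` for all `v ∈ D`, `0 < h ≤ 1`. -/
theorem sinh_cosh_lower_bounds (β : ℝ) (hβ0 : 0 < β) (hβ : β < Real.pi / 4) :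
    ∃ M : ℝ, 0 < M ∧
      ∀ v : ℂ, |v.im| ≤ -Real.tan β * v.re + Real.sqrt 2 / 2 →
        ∀ h : ℝ, 0 < h → h ≤ 1 →
          M * Real.sqrt h * ‖v‖
              ≤ ‖Complex.sinh (v * Real.sqrt h / 2)‖ ∧
          M ≤ ‖Complex.cosh (v * Real.sqrt h / 2)‖ := by
  have hπ : 0 < Real.pi := Real.pi_pos
  have hπ3 : Real.pi > 3 := Real.pi_gt_three
  have ht0 : 0 < Real.tan β := Real.tan_pos_of_pos_of_lt_pi_div_two hβ0 (by linarith)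
  have ht1 : Real.tan β < 1 := by
    rw [← Real.tan_pi_div_four]
    exact Real.tan_lt_tan_of_nonneg_of_lt_pi_div_two hβ0.le (by linarith) hβ
  have h2e : Real.sqrt 2 ^ 2 = 2 := Real.sq_sqrt (by norm_num)
  have h2nn : 0 ≤ Real.sqrt 2 := Real.sqrt_nonneg 2
  have h2ub : Real.sqrt 2 ≤ 3 / 2 := by nlinarith
  refine ⟨1 / 16, by norm_num, ?_⟩
  intro v hv h h0 h1
  set s := Real.sqrt h with hsdef
  have hs0 : 0 < s := Real.sqrt_pos.mpr h0
  have hs1 : s ≤ 1 := by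
    rw [hsdef, show (1 : ℝ) = Real.sqrt 1 by simp]
    exact Real.sqrt_le_sqrt h1
  set x := v.re * s / 2 with hxdef
  set y := v.im * s / 2 with hydef
  have hz : v * (s : ℂ) / 2 = (x : ℂ) + (y : ℂ) * Complex.I := by
    have h' : ((x : ℝ) : ℂ) + ((y : ℝ) : ℂ) * Complex.I
        = ((v.re : ℂ) + (v.im : ℂ) * Complex.I) * (s : ℂ) / 2 := by
      rw [hxdef, hydef]; push_cast; ring
    rw [h', Complex.re_add_im]
  clear_value s x y
  have hxy : |y| ≤ Real.tan β * (-x) + Real.sqrt 2 / 4 := by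
    have h1' : |y| = |v.im| * (s / 2) := by
      rw [hydef, show v.im * s / 2 = v.im * (s / 2) by ring, abs_mul,
        abs_of_nonneg (by positivity : (0 : ℝ) ≤ s / 2)]
    have h2' := mul_le_mul_of_nonneg_right hv (by positivity : (0 : ℝ) ≤ s / 2)
    rw [← h1'] at h2'
    have : (-Real.tan β * v.re + Real.sqrt 2 / 2) * (s / 2)
        = Real.tan β * (-x) + Real.sqrt 2 / 2 * (s / 2) := by rw [hxdef]; ring
    rw [this] at h2'
    nlinarith
  have habs : ‖v‖ ^ 2 = v.re ^ 2 + v.im ^ 2 := by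
    rw [Complex.sq_norm, Complex.normSq_apply]; ring
  have hx2 : x ^ 2 = v.re ^ 2 * s ^ 2 / 4 := by rw [hxdef]; ring
  have hy2 : y ^ 2 = v.im ^ 2 * s ^ 2 / 4 := by rw [hydef]; ring
  -- generic case-B deduction
  have caseB : ∀ c : ℝ, 0 < c - Real.sqrt 2 / 4 → c < |y| →
      c - Real.sqrt 2 / 4 < -x ∧ |y| ≤ -x + Real.sqrt 2 / 4 := by
    intro c hc hcy
    have h1' : c - Real.sqrt 2 / 4 < Real.tan β * (-x) := by linarith
    have hx0 : 0 < -x := by nlinarith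
    have h2' : Real.tan β * (-x) ≤ -x := by nlinarith
    exact ⟨by linarith, by linarith⟩
  constructor
  · -- sinh bound
    have key : (x ^ 2 + y ^ 2) / 64 ≤ Real.sinh x ^ 2 + Real.sin y ^ 2 := by
      by_cases hy1 : |y| ≤ 1
      · have hsin : (3 / 4 * |y|) ^ 2 ≤ Real.sin y ^ 2 := by
          rcases eq_or_ne y 0 with h' | h'
          · simp [h']
          · have h0' : 0 < |y| := abs_pos.mpr h'
            have hsub := Real.sin_gt_sub_cube h0'
            have h3 : |y| ^ 3 ≤ |y| := by
              have := pow_le_pow_of_le_one (abs_nonneg y) hy1 (by norm_num : 1 ≤ 3)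
              simpa using this
            have h4 : 3 / 4 * |y| ≤ Real.sin |y| := by linarith
            rw [← sin_sq_abs' y]
            exact pow_le_pow_left₀ (by positivity) h4 2
        nlinarith [sq_le_sinh_sq x, sq_abs y]
      · push_neg at hy1
        obtain ⟨hxl, hyu⟩ := caseB 1 (by nlinarith) hy1
        have hyy : y ^ 2 ≤ (-x + Real.sqrt 2 / 4) ^ 2 := by
          rw [← sq_abs y]
          exact pow_le_pow_left₀ (abs_nonneg y) hyu 2
        nlinarith [sq_le_sinh_sq x, sq_nonneg (Real.sin y)]
    have hfin : (1 / 16 * s * ‖v‖) ^ 2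
        ≤ ‖Complex.sinh (v * (s : ℂ) / 2)‖ ^ 2 := by
      rw [hz, sq_abs_sinh']
      nlinarith [key]
    have hnn : 0 ≤ 1 / 16 * s * ‖v‖ := by positivity
    have := Real.sqrt_le_sqrt hfin
    rwa [Real.sqrt_sq hnn, Real.sqrt_sq (norm_nonneg _)] at this
  · -- cosh bound
    have key : (1 / 16 : ℝ) ^ 2 ≤ Real.sinh x ^ 2 + Real.cos y ^ 2 := by
      by_cases hy1 : |y| ≤ Real.pi / 3
      · have hcos : Real.cos (Real.pi / 3) ≤ Real.cos |y| :=
          Real.cos_le_cos_of_nonneg_of_le_pi (abs_nonneg y) (by linarith) hy1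
        rw [Real.cos_pi_div_three, Real.cos_abs] at hcos
        nlinarith [sq_nonneg (Real.sinh x)]
      · push_neg at hy1
        obtain ⟨hxl, _⟩ := caseB (Real.pi / 3) (by nlinarith) hy1
        nlinarith [sq_le_sinh_sq x, sq_nonneg (Real.cos y)]
    have hfin : ((1 : ℝ) / 16) ^ 2
        ≤ ‖Complex.cosh (v * (s : ℂ) / 2)‖ ^ 2 := by
      rw [hz, sq_abs_cosh']; exact key
    have := Real.sqrt_le_sqrt hfin
    rwa [Real.sqrt_sq (by norm_num : (0:ℝ) ≤ 1/16), Real.sqrt_sq (norm_nonneg _)] at this
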